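/- With the setup of the previous statement (i.i.d. centered charges with unit variance, independent of the walk), for all integers 0 ≤ a < b: E[(K_b − K_a)² | S] = ∑_{k=a+1}^{b} N_{k-1}(S_k), where N_m(x) = ∑_{i=1}^{m} 1_{S_i = x}. Consequently E[(K_b − K_a)² | S] ≤ √(I_b)·√(I_{a,b}), where I_b = ∑_x N_b(x)² and I_{a,b} = ∑_x (N_b(x) − N_a(x))². -/

import Mathlib

open MeasureTheory ProbabilityTheory Finset

set_option maxHeartbeats 1000000
set_option linter.unusedVariables false
set_option linter.unnecessarySimpa false

lemma aux_prod {Ω : Type*} {m0 : MeasurableSpace Ω} (μ : Measure Ω) [IsProbabilityMeasure μ]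
    (q : ℕ → Ω → ℝ) (hqmeas : ∀ i, Measurable (q i))
    (hqindep : iIndepFun q μ)
    (e : ℕ → ℕ) (hint : ∀ t, Integrable (fun ω => q t ω ^ e t) μ)
    (s : Finset ℕ) :
    Integrable (fun ω => ∏ t ∈ s, q t ω ^ e t) μ ∧
      ∫ ω, ∏ t ∈ s, q t ω ^ e t ∂μ = ∏ t ∈ s, ∫ ω, q t ω ^ e t ∂μ := by
  classical
  induction s using Finset.induction with
  | empty => simp
  | @insert i s hi ih =>
    obtain ⟨ihInt, ihVal⟩ := ih
    have hIndep : IndepFun (fun ω => q i ω ^ e i) (fun ω => ∏ t ∈ s, q t ω ^ e t) μ := by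
      have h := (hqindep.comp (fun t => (· ^ e t))
          (fun t => measurable_id.pow_const (e t))).indepFun_finsetProd_of_notMem
          (fun t => (hqmeas t).pow_const (e t)) hi
      have hfn : (∏ j ∈ s, ((· ^ e j) ∘ q j)) = fun ω => ∏ t ∈ s, q t ω ^ e t := by
        funext ω; simp [Finset.prod_apply]
      rw [hfn] at h
      exact h.symm
    have hprod : (fun ω => ∏ t ∈ insert i s, q t ω ^ e t)
        = fun ω => q i ω ^ e i * ∏ t ∈ s, q t ω ^ e t := by
      funext ω; exact Finset.prod_insert hi
    constructor
    · rw [hprod]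
      exact hIndep.integrable_mul (hint i) ihInt
    · rw [hprod, Finset.prod_insert hi, ← ihVal]
      exact hIndep.integral_fun_mul_eq_mul_integral (hint i).1 ihInt.1

lemma aux_moment {Ω : Type*} {m0 : MeasurableSpace Ω} (μ : Measure Ω) [IsProbabilityMeasure μ]
    (q : ℕ → Ω → ℝ) (hqmeas : ∀ i, Measurable (q i))
    (hqindep : iIndepFun q μ)
    (hqcent : ∀ i, ∫ ω, q i ω ∂μ = 0)
    (hqvar : ∀ i, ∫ ω, (q i ω) ^ 2 ∂μ = 1)
    (hqint : ∀ i, Integrable (fun ω => (q i ω) ^ 2) μ)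
    {i j k l : ℕ} (hij : i < j) (hkl : k < l) :
    Integrable (fun ω => q i ω * q j ω * (q k ω * q l ω)) μ ∧
      ∫ ω, q i ω * q j ω * (q k ω * q l ω) ∂μ = if i = k ∧ j = l then 1 else 0 := by
  classical
  set m : Multiset ℕ := {i, j, k, l} with hm
  have key : ∀ ω, q i ω * q j ω * (q k ω * q l ω) = ∏ t ∈ m.toFinset, q t ω ^ m.count t := by
    intro ω
    have h := Finset.prod_multiset_map_count m (fun t => q t ω)
    rw [← h]
    simp [hm, mul_assoc]
  have hcount : ∀ t, m.count t =
      (if t = i then 1 else 0) + (if t = j then 1 else 0)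
        + (if t = k then 1 else 0) + (if t = l then 1 else 0) := by
    intro t
    simp only [hm, Multiset.insert_eq_cons, Multiset.count_cons, Multiset.count_singleton]
    split_ifs <;> omega
  have hcount2 : ∀ t, m.count t ≤ 2 := by
    intro t; rw [hcount t]; split_ifs <;> omega
  have hqL1 : ∀ t, Integrable (q t) μ :=
    fun t => ((memLp_two_iff_integrable_sq
      (hqmeas t).aestronglyMeasurable).2 (hqint t)).integrable one_le_two
  have hintall : ∀ t, Integrable (fun ω => q t ω ^ m.count t) μ := by
    intro t
    have h2 := hcount2 t
    interval_cases h : m.count t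
    · simpa using (integrable_const (1:ℝ))
    · simpa using hqL1 t
    · exact hqint t
  obtain ⟨hInt, hVal⟩ := aux_prod μ q hqmeas hqindep (fun t => m.count t) hintall m.toFinset
  have hfun : (fun ω => q i ω * q j ω * (q k ω * q l ω))
      = fun ω => ∏ t ∈ m.toFinset, q t ω ^ m.count t := funext key
  refine ⟨by rw [hfun]; exact hInt, ?_⟩
  rw [hfun, hVal]
  by_cases hpos : i = k ∧ j = l
  · rw [if_pos hpos]
    obtain ⟨hik, hjl⟩ := hpos
    apply Finset.prod_eq_one
    intro t ht
    rw [Multiset.mem_toFinset] at ht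
    have htm : t = i ∨ t = j ∨ t = k ∨ t = l := by
      simpa [hm] using ht
    have hct : m.count t = 2 := by
      rw [hcount t]; split_ifs <;> omega
    rw [hct]
    exact hqvar t
  · rw [if_neg hpos]
    -- find an index with count 1
    have hex : ∃ t0, m.count t0 = 1 := by
      by_cases hik : i = k
      · refine ⟨j, ?_⟩
        rw [hcount j]; split_ifs <;> omega
      · by_cases hil : i = l
        · refine ⟨j, ?_⟩
          rw [hcount j]; split_ifs <;> omega
        · refine ⟨i, ?_⟩
          rw [hcount i]; split_ifs <;> omega
    obtain ⟨t0, ht0⟩ := hex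
    have hmem : t0 ∈ m.toFinset := by
      rw [Multiset.mem_toFinset, ← Multiset.count_pos, ht0]; omega
    apply Finset.prod_eq_zero hmem
    rw [ht0]; simp only [pow_one]
    exact hqcent t0

/-- Conditional second moment of an increment of the charged-polymer Hamiltonian given the
walk: `E[(K_b - K_a)² | S] = ∑_{k=a+1}^b N_{k-1}(S_k)` a.s., and this is at most
`√I_b √I_{a,b}`. -/
theorem charged_polymer_conditional_variance
    {Ω : Type*} {m0 : MeasurableSpace Ω} (μ : Measure Ω) [IsProbabilityMeasure μ]
    (d : ℕ) (q : ℕ → Ω → ℝ) (S : ℕ → Ω → (Fin d → ℤ))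
    (hqmeas : ∀ i, Measurable (q i)) (hSmeas : ∀ n, Measurable (S n))
    (hqindep : iIndepFun q μ)
    (hqident : ∀ i, IdentDistrib (q i) (q 1) μ μ)
    (hqcent : ∀ i, ∫ ω, q i ω ∂μ = 0)
    (hqvar : ∀ i, ∫ ω, (q i ω) ^ 2 ∂μ = 1)
    (hqint : ∀ i, Integrable (fun ω => (q i ω) ^ 2) μ)
    (hqS : IndepFun (fun ω => fun i : ℕ => q i ω) (fun ω => fun n : ℕ => S n ω) μ)
    (K : ℕ → Ω → ℝ)
    (hK : ∀ n ω, K n ω = ∑ p ∈ (Finset.Icc 1 n ×ˢ Finset.Icc 1 n).filter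
        (fun p => p.1 < p.2),
        q p.1 ω * q p.2 ω * (if S p.1 ω = S p.2 ω then 1 else 0))
    (N : ℕ → (Fin d → ℤ) → Ω → ℝ)
    (hN : ∀ m x ω, N m x ω = ∑ i ∈ Finset.Icc 1 m, if S i ω = x then (1:ℝ) else 0)
    (mS : MeasurableSpace Ω)
    (hmS : mS = MeasurableSpace.comap (fun ω => fun n : ℕ => S n ω) inferInstance)
    (hmSle : mS ≤ m0)
    (a b : ℕ) (hab : a < b) :
    (μ[(fun ω => (K b ω - K a ω) ^ 2)|mS]
      =ᵐ[μ] fun ω => ∑ k ∈ Finset.Icc (a+1) b, N (k-1) (S k ω) ω)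
    ∧ (∀ᵐ ω ∂μ, (μ[(fun ω' => (K b ω' - K a ω') ^ 2)|mS]) ω
        ≤ Real.sqrt (∑' x : Fin d → ℤ, (N b x ω) ^ 2)
          * Real.sqrt (∑' x : Fin d → ℤ, (N b x ω - N a x ω) ^ 2)) := by
  classical
  -- notation
  set Y : Ω → ℕ → (Fin d → ℤ) := fun ω => fun n : ℕ => S n ω with hYdef
  set X : Ω → ℕ → ℝ := fun ω => fun n : ℕ => q n ω with hXdef
  have hYm : Measurable[m0] Y := @measurable_pi_lambda Ω ℕ (fun _ => Fin d → ℤ) m0 _ Y hSmeas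
  set T : ℕ × ℕ → Ω → ℝ := fun p ω => if S p.1 ω = S p.2 ω then (1:ℝ) else 0 with hT
  set D : Finset (ℕ × ℕ) :=
    ((Finset.Icc 1 b ×ˢ Finset.Icc 1 b).filter (fun p => p.1 < p.2)).filter
      (fun p => a < p.2) with hD
  have hDlt : ∀ p ∈ D, p.1 < p.2 := by
    intro p hp
    simp only [hD, Finset.mem_filter] at hp
    exact hp.1.2
  have hTmeas : ∀ p : ℕ × ℕ, Measurable[m0] (T p) := by
    intro p
    have hset : MeasurableSet[m0] {ω | S p.1 ω = S p.2 ω} := by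
      have : {ω | S p.1 ω = S p.2 ω}
          = (fun ω => (S p.1 ω, S p.2 ω)) ⁻¹' {z | z.1 = z.2} := rfl
      rw [this]
      exact ((hSmeas p.1).prodMk (hSmeas p.2)) ((Set.to_countable _).measurableSet)
    exact Measurable.ite hset measurable_const measurable_const
  have hTbd : ∀ p ω, |T p ω| ≤ 1 := by
    intro p ω; simp only [hT]; split_ifs <;> norm_num
  have hTnn : ∀ p ω, 0 ≤ T p ω := by
    intro p ω; simp only [hT]; split_ifs <;> norm_num
  have hbdd : ∀ (f : Ω → ℝ), Measurable[m0] f → (∀ ω, |f ω| ≤ 1) → Integrable f μ := by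
    intro f hf hb
    exact (integrable_const (1:ℝ)).mono' hf.aestronglyMeasurable
      (Filter.Eventually.of_forall (by simpa [Real.norm_eq_abs] using hb))
  -- step 1 : K b - K a = sum over D
  have hKdiff : ∀ ω, K b ω - K a ω = ∑ p ∈ D, q p.1 ω * q p.2 ω * T p ω := by
    intro ω
    have hsplit : (Finset.Icc 1 b ×ˢ Finset.Icc 1 b).filter (fun p => p.1 < p.2)
        = ((Finset.Icc 1 a ×ˢ Finset.Icc 1 a).filter (fun p => p.1 < p.2)) ∪ D := by
      ext p
      simp only [hD, Finset.mem_filter, Finset.mem_product, Finset.mem_Icc,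
        Finset.mem_union]
      omega
    have hdisj : Disjoint ((Finset.Icc 1 a ×ˢ Finset.Icc 1 a).filter
        (fun p => p.1 < p.2)) D := by
      rw [Finset.disjoint_left]
      intro p hp hpD
      simp only [hD, Finset.mem_filter, Finset.mem_product, Finset.mem_Icc] at hp hpD
      omega
    rw [hK b ω, hK a ω, hsplit, Finset.sum_union hdisj]
    simp only [hT]
    ring
  -- step 2 : sum over D equals the N sum
  have hg : ∀ ω, (∑ k ∈ Finset.Icc (a+1) b, N (k-1) (S k ω) ω) = ∑ p ∈ D, T p ω := by
    intro ω
    have e1 : (∑ k ∈ Finset.Icc (a+1) b, N (k-1) (S k ω) ω)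
        = ∑ k ∈ Finset.Icc (a+1) b, ∑ i ∈ Finset.Icc 1 (k-1),
            (if S i ω = S k ω then (1:ℝ) else 0) :=
      Finset.sum_congr rfl fun k _ => hN _ _ ω
    rw [e1, Finset.sum_sigma']
    simp only [hD, hT]
    refine Finset.sum_nbij' (i := fun x => (x.2, x.1)) (j := fun p => ⟨p.2, p.1⟩)
      ?_ ?_ ?_ ?_ ?_
    · intro x hx
      simp only [Finset.mem_sigma, Finset.mem_Icc] at hx
      simp only [Finset.mem_filter, Finset.mem_product, Finset.mem_Icc]
      omega
    · intro p hp
      simp only [Finset.mem_filter, Finset.mem_product, Finset.mem_Icc] at hp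
      simp only [Finset.mem_sigma, Finset.mem_Icc]
      omega
    · intro x _; rfl
    · intro p _; rfl
    · intro x _; rfl
  -- integrability of terms
  have hquad : ∀ p ∈ D, ∀ p' ∈ D,
      Integrable (fun ω => q p.1 ω * q p.2 ω * (q p'.1 ω * q p'.2 ω)) μ ∧
      ∫ ω, q p.1 ω * q p.2 ω * (q p'.1 ω * q p'.2 ω) ∂μ
        = if p = p' then (1:ℝ) else 0 := by
    intro p hp p' hp'
    obtain ⟨h1, h2⟩ := aux_moment μ q hqmeas hqindep hqcent hqvar hqint
      (hDlt p hp) (hDlt p' hp')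
    refine ⟨h1, ?_⟩
    rw [h2]
    congr 1
    simp [Prod.ext_iff]
  have hf_expand : ∀ ω, (K b ω - K a ω) ^ 2
      = ∑ p ∈ D, ∑ p' ∈ D,
          q p.1 ω * q p.2 ω * (q p'.1 ω * q p'.2 ω) * (T p ω * T p' ω) := by
    intro ω
    rw [hKdiff ω, sq, Finset.sum_mul_sum]
    exact Finset.sum_congr rfl fun p _ => Finset.sum_congr rfl fun p' _ => by ring
  have hfint : Integrable (fun ω => (K b ω - K a ω) ^ 2) μ := by
    have hfe : (fun ω => (K b ω - K a ω) ^ 2)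
        = fun ω => ∑ p ∈ D, ∑ p' ∈ D,
            q p.1 ω * q p.2 ω * (q p'.1 ω * q p'.2 ω) * (T p ω * T p' ω) :=
      funext hf_expand
    rw [hfe]
    refine integrable_finset_sum _ fun p hp => integrable_finset_sum _ fun p' hp' => ?_
    have hq1 := (hquad p hp p' hp').1
    refine hq1.abs.mono' ?_ ?_
    · exact ((((hqmeas p.1).mul (hqmeas p.2)).mul
        ((hqmeas p'.1).mul (hqmeas p'.2))).mul
        ((hTmeas p).mul (hTmeas p'))).aestronglyMeasurable
    · refine Filter.Eventually.of_forall fun ω => ?_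
      rw [Real.norm_eq_abs, abs_mul]
      have h1 : |T p ω * T p' ω| ≤ 1 := by
        rw [abs_mul]
        exact mul_le_one₀ (hTbd p ω) (abs_nonneg _) (hTbd p' ω)
      calc |q p.1 ω * q p.2 ω * (q p'.1 ω * q p'.2 ω)| * |T p ω * T p' ω|
          ≤ |q p.1 ω * q p.2 ω * (q p'.1 ω * q p'.2 ω)| * 1 :=
            mul_le_mul_of_nonneg_left h1 (abs_nonneg _)
        _ = |q p.1 ω * q p.2 ω * (q p'.1 ω * q p'.2 ω)| := mul_one _
  have hprodint : ∀ (Q G : Ω → ℝ), Integrable Q μ → Measurable[m0] G → (∀ ω, |G ω| ≤ 1) →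
      Integrable (fun ω => Q ω * G ω) μ := by
    intro Q G hQ hG hb
    refine hQ.abs.mono' (hQ.aestronglyMeasurable.mul hG.aestronglyMeasurable) ?_
    refine Filter.Eventually.of_forall fun ω => ?_
    rw [Real.norm_eq_abs, abs_mul]
    calc |Q ω| * |G ω| ≤ |Q ω| * 1 := mul_le_mul_of_nonneg_left (hb ω) (abs_nonneg _)
      _ = |Q ω| := mul_one _
  -- the candidate conditional expectation
  set g : Ω → ℝ := fun ω => ∑ p ∈ D, T p ω with hgdef
  have hgint : Integrable g μ :=
    integrable_finset_sum _ fun p _ => hbdd (T p) (hTmeas p) (hTbd p)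
  have hYcm : Measurable[mS] Y := by
    rw [hmS]; exact fun t ht => ⟨t, ht, rfl⟩
  have hdiag : ∀ i k : ℕ, MeasurableSet {y : ℕ → (Fin d → ℤ) | y i = y k} := by
    intro i k
    have : {y : ℕ → (Fin d → ℤ) | y i = y k}
        = (fun y : ℕ → (Fin d → ℤ) => (y i, y k)) ⁻¹' {z | z.1 = z.2} := rfl
    rw [this]
    exact ((measurable_pi_apply i).prodMk (measurable_pi_apply k))
      ((Set.to_countable _).measurableSet)
  have hG : Measurable (fun y : ℕ → (Fin d → ℤ) =>
      ∑ p ∈ D, (if y p.1 = y p.2 then (1:ℝ) else 0)) := by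
    refine Finset.measurable_sum _ fun p _ => ?_
    exact Measurable.ite (hdiag p.1 p.2) measurable_const measurable_const
  have hgmS : Measurable[mS] g := by
    have hco : g = (fun y : ℕ → (Fin d → ℤ) =>
        ∑ p ∈ D, (if y p.1 = y p.2 then (1:ℝ) else 0)) ∘ Y := rfl
    rw [hco]; exact hG.comp hYcm
  -- the set-integral identity
  have hsetint : ∀ s : Set Ω, MeasurableSet[mS] s → μ s < ⊤ →
      ∫ ω in s, g ω ∂μ = ∫ ω in s, (K b ω - K a ω) ^ 2 ∂μ := by
    intro s hs _
    rw [hmS] at hs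
    obtain ⟨t, ht, rfl⟩ := hs
    clear hgmS hYcm hmS hmSle mS
    have hsm0 : MeasurableSet[m0] (Y ⁻¹' t) := hYm ht
    set χ : Ω → ℝ := fun ω => if Y ω ∈ t then 1 else 0 with hχ
    have hχmeas : Measurable[m0] χ :=
      Measurable.ite (hYm ht) measurable_const measurable_const
    have hχbd : ∀ ω, |χ ω| ≤ 1 := by
      intro ω; simp only [hχ]; split_ifs <;> norm_num
    have hind : ∀ f : Ω → ℝ, ∫ ω in Y ⁻¹' t, f ω ∂μ = ∫ ω, f ω * χ ω ∂μ := by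
      intro f
      rw [← integral_indicator hsm0]
      congr 1
      funext ω
      by_cases h : Y ω ∈ t
      · simp [Set.indicator, hχ, h]
      · simp [Set.indicator, hχ, h]
    rw [hind, hind]
    have hTTχbd : ∀ p p' : ℕ × ℕ, ∀ ω, |T p ω * T p' ω * χ ω| ≤ 1 := by
      intro p p' ω
      rw [abs_mul, abs_mul]
      exact mul_le_one₀ (mul_le_one₀ (hTbd p ω) (abs_nonneg _) (hTbd p' ω))
        (abs_nonneg _) (hχbd ω)
    have hTTχmeas : ∀ p p' : ℕ × ℕ, Measurable[m0] (fun ω => T p ω * T p' ω * χ ω) :=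
      fun p p' => ((hTmeas p).mul (hTmeas p')).mul hχmeas
    have hterm : ∀ p ∈ D, ∀ p' ∈ D,
        ∫ ω, (q p.1 ω * q p.2 ω * (q p'.1 ω * q p'.2 ω)) * (T p ω * T p' ω * χ ω) ∂μ
          = (if p = p' then (1:ℝ) else 0) * ∫ ω, T p ω * T p' ω * χ ω ∂μ := by
      intro p hp p' hp'
      have hφ : Measurable (fun c : ℕ → ℝ => c p.1 * c p.2 * (c p'.1 * c p'.2)) :=
        ((measurable_pi_apply p.1).mul (measurable_pi_apply p.2)).mul
          ((measurable_pi_apply p'.1).mul (measurable_pi_apply p'.2))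
      have hψ : Measurable (fun y : ℕ → (Fin d → ℤ) =>
          (if y p.1 = y p.2 then (1:ℝ) else 0) * (if y p'.1 = y p'.2 then (1:ℝ) else 0)
            * (if y ∈ t then (1:ℝ) else 0)) := by
        refine ((Measurable.ite (hdiag p.1 p.2) measurable_const measurable_const).mul
          (Measurable.ite (hdiag p'.1 p'.2) measurable_const measurable_const)).mul
          (Measurable.ite ht measurable_const measurable_const)
      have hIF : IndepFun (fun ω => q p.1 ω * q p.2 ω * (q p'.1 ω * q p'.2 ω))
          (fun ω => T p ω * T p' ω * χ ω) μ := hqS.comp hφ hψ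
      have hmul := hIF.integral_fun_mul_eq_mul_integral (hquad p hp p' hp').1.1
        (hbdd _ (hTTχmeas p p') (hTTχbd p p')).1
      exact hmul.trans (by rw [(hquad p hp p' hp').2])
    have hTsq : ∀ p : ℕ × ℕ, ∀ ω, T p ω * T p ω * χ ω = T p ω * χ ω := by
      intro p ω; simp only [hT]; split_ifs <;> ring
    have hL : (fun ω => g ω * χ ω) = fun ω => ∑ p ∈ D, T p ω * χ ω := by
      funext ω; simp only [hgdef]; rw [Finset.sum_mul]
    have hR : (fun ω => (K b ω - K a ω) ^ 2 * χ ω)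
        = fun ω => ∑ p ∈ D, ∑ p' ∈ D,
            (q p.1 ω * q p.2 ω * (q p'.1 ω * q p'.2 ω)) * (T p ω * T p' ω * χ ω) := by
      funext ω
      rw [hf_expand ω, Finset.sum_mul]
      refine Finset.sum_congr rfl fun p _ => ?_
      rw [Finset.sum_mul]
      exact Finset.sum_congr rfl fun p' _ => by ring
    calc ∫ ω, g ω * χ ω ∂μ
        = ∑ p ∈ D, ∫ ω, T p ω * χ ω ∂μ := by
          rw [hL]
          refine integral_finset_sum _ fun p _ => hbdd _ ((hTmeas p).mul hχmeas)
            fun ω => ?_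
          rw [abs_mul]
          exact mul_le_one₀ (hTbd p ω) (abs_nonneg _) (hχbd ω)
      _ = ∑ p ∈ D, ∫ ω, T p ω * T p ω * χ ω ∂μ := by
          refine Finset.sum_congr rfl fun p _ => ?_
          have : (fun ω => T p ω * T p ω * χ ω) = fun ω => T p ω * χ ω :=
            funext (hTsq p)
          rw [this]
      _ = ∑ p ∈ D, ∑ p' ∈ D, (if p = p' then (1:ℝ) else 0)
            * ∫ ω, T p ω * T p' ω * χ ω ∂μ := by
          refine Finset.sum_congr rfl fun p hp => ?_
          have e : (∑ p' ∈ D, (if p = p' then (1:ℝ) else 0)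
                * ∫ ω, T p ω * T p' ω * χ ω ∂μ)
              = ∑ p' ∈ D, (if p = p'
                then (∫ ω, T p ω * T p' ω * χ ω ∂μ) else 0) :=
            Finset.sum_congr rfl fun p' _ => by split_ifs <;> ring
          rw [e, Finset.sum_ite_eq D p, if_pos hp]
      _ = ∑ p ∈ D, ∑ p' ∈ D,
            ∫ ω, (q p.1 ω * q p.2 ω * (q p'.1 ω * q p'.2 ω))
              * (T p ω * T p' ω * χ ω) ∂μ := by
          refine Finset.sum_congr rfl fun p hp => Finset.sum_congr rfl fun p' hp' => ?_
          exact (hterm p hp p' hp').symm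
      _ = ∫ ω, (K b ω - K a ω) ^ 2 * χ ω ∂μ := by
          rw [hR]
          rw [integral_finset_sum _ fun p hp => integrable_finset_sum _ fun p' hp' =>
            hprodint _ _ (hquad p hp p' hp').1 (hTTχmeas p p') (hTTχbd p p')]
          refine Finset.sum_congr rfl fun p hp => ?_
          rw [integral_finset_sum _ fun p' hp' =>
            hprodint _ _ (hquad p hp p' hp').1 (hTTχmeas p p') (hTTχbd p p')]
  have hgmS' : AEStronglyMeasurable[mS] g μ :=
    StronglyMeasurable.aestronglyMeasurable hgmS.stronglyMeasurable
  have hmain : g =ᵐ[μ] μ[(fun ω => (K b ω - K a ω) ^ 2)|mS] :=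
    ae_eq_condExp_of_forall_setIntegral_eq hmSle hfint
      (fun s _ _ => Integrable.integrableOn (mα := m0) (f := g) (s := s) (μ := μ) hgint) hsetint hgmS'
  have hpart1 : μ[(fun ω => (K b ω - K a ω) ^ 2)|mS]
      =ᵐ[μ] fun ω => ∑ k ∈ Finset.Icc (a+1) b, N (k-1) (S k ω) ω := by
    refine hmain.symm.trans (Filter.EventuallyEq.of_eq ?_)
    funext ω
    exact (hg ω).symm
  have hpt : ∀ ω, (∑ k ∈ Finset.Icc (a+1) b, N (k-1) (S k ω) ω)
      ≤ Real.sqrt (∑' x : Fin d → ℤ, (N b x ω) ^ 2)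
        * Real.sqrt (∑' x : Fin d → ℤ, (N b x ω - N a x ω) ^ 2) := by
    intro ω
    set F : Finset (Fin d → ℤ) := (Finset.Icc 1 b).image (fun i => S i ω) with hF
    have hNb0 : ∀ x, x ∉ F → N b x ω = 0 := by
      intro x hx
      rw [hN]
      refine Finset.sum_eq_zero fun i hi => ?_
      rw [if_neg]
      exact fun h => hx (Finset.mem_image.2 ⟨i, hi, h⟩)
    have hNa0 : ∀ x, x ∉ F → N a x ω = 0 := by
      intro x hx
      rw [hN]
      refine Finset.sum_eq_zero fun i hi => ?_
      rw [if_neg]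
      refine fun h => hx (Finset.mem_image.2 ⟨i, ?_, h⟩)
      simp only [Finset.mem_Icc] at hi ⊢
      omega
    have hdiff : ∀ x, N b x ω - N a x ω
        = ∑ i ∈ Finset.Icc (a+1) b, (if S i ω = x then (1:ℝ) else 0) := by
      intro x
      rw [hN, hN]
      have hsplit : Finset.Icc 1 b = Finset.Icc 1 a ∪ Finset.Icc (a+1) b := by
        ext i
        simp only [Finset.mem_Icc, Finset.mem_union]
        omega
      have hdisj : Disjoint (Finset.Icc 1 a) (Finset.Icc (a+1) b) := by
        rw [Finset.disjoint_left]
        intro i hi hi'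
        simp only [Finset.mem_Icc] at hi hi'
        omega
      rw [hsplit, Finset.sum_union hdisj]
      ring
    have hNbnn : ∀ x, 0 ≤ N b x ω := by
      intro x
      rw [hN]
      refine Finset.sum_nonneg fun i _ => ?_
      split_ifs <;> norm_num
    have hdnn : ∀ x, 0 ≤ N b x ω - N a x ω := by
      intro x
      rw [hdiff]
      refine Finset.sum_nonneg fun i _ => ?_
      split_ifs <;> norm_num
    have hstep1 : (∑ k ∈ Finset.Icc (a+1) b, N (k-1) (S k ω) ω)
        ≤ ∑ k ∈ Finset.Icc (a+1) b, N b (S k ω) ω := by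
      refine Finset.sum_le_sum fun k hk => ?_
      rw [hN, hN]
      refine Finset.sum_le_sum_of_subset_of_nonneg (Finset.Icc_subset_Icc le_rfl ?_)
        (fun i _ _ => by split_ifs <;> norm_num)
      simp only [Finset.mem_Icc] at hk
      omega
    have hstep2 : (∑ k ∈ Finset.Icc (a+1) b, N b (S k ω) ω)
        = ∑ x ∈ F, N b x ω * (N b x ω - N a x ω) := by
      have h1 : ∀ k ∈ Finset.Icc (a+1) b, N b (S k ω) ω
          = ∑ x ∈ F, (if S k ω = x then (1:ℝ) else 0) * N b x ω := by
        intro k hk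
        have hmem : S k ω ∈ F := by
          refine Finset.mem_image.2 ⟨k, ?_, rfl⟩
          simp only [Finset.mem_Icc] at hk ⊢
          omega
        have e : (∑ x ∈ F, (if S k ω = x then (1:ℝ) else 0) * N b x ω)
            = ∑ x ∈ F, (if S k ω = x then N b x ω else 0) :=
          Finset.sum_congr rfl fun x _ => by split_ifs <;> ring
        rw [e, Finset.sum_ite_eq F (S k ω) (fun x => N b x ω), if_pos hmem]
      calc ∑ k ∈ Finset.Icc (a+1) b, N b (S k ω) ω
          = ∑ k ∈ Finset.Icc (a+1) b, ∑ x ∈ F,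
              (if S k ω = x then (1:ℝ) else 0) * N b x ω := Finset.sum_congr rfl h1
        _ = ∑ x ∈ F, ∑ k ∈ Finset.Icc (a+1) b,
              (if S k ω = x then (1:ℝ) else 0) * N b x ω := Finset.sum_comm
        _ = ∑ x ∈ F, N b x ω * (N b x ω - N a x ω) := by
            refine Finset.sum_congr rfl fun x _ => ?_
            rw [← Finset.sum_mul, ← hdiff x]
            ring
    have hCS : (∑ x ∈ F, N b x ω * (N b x ω - N a x ω))
        ≤ Real.sqrt (∑ x ∈ F, (N b x ω) ^ 2)
          * Real.sqrt (∑ x ∈ F, (N b x ω - N a x ω) ^ 2) := by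
      have h2 := Finset.sum_mul_sq_le_sq_mul_sq F (fun x => N b x ω)
        (fun x => N b x ω - N a x ω)
      have hnn : 0 ≤ ∑ x ∈ F, N b x ω * (N b x ω - N a x ω) :=
        Finset.sum_nonneg fun x _ => mul_nonneg (hNbnn x) (hdnn x)
      have h3 := Real.sqrt_le_sqrt h2
      rw [Real.sqrt_sq hnn] at h3
      rwa [Real.sqrt_mul (Finset.sum_nonneg fun x _ => sq_nonneg (N b x ω))] at h3
    have ht1 : (∑' x : Fin d → ℤ, (N b x ω) ^ 2) = ∑ x ∈ F, (N b x ω) ^ 2 :=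
      tsum_eq_sum fun x hx => by rw [hNb0 x hx]; ring
    have ht2 : (∑' x : Fin d → ℤ, (N b x ω - N a x ω) ^ 2)
        = ∑ x ∈ F, (N b x ω - N a x ω) ^ 2 :=
      tsum_eq_sum fun x hx => by rw [hNb0 x hx, hNa0 x hx]; ring
    rw [ht1, ht2]
    exact le_trans (le_trans hstep1 (le_of_eq hstep2)) hCS
  refine ⟨hpart1, ?_⟩
  filter_upwards [hpart1] with ω hω
  rw [hω]
  exact hpt ω
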